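/- Let R be an F_p-algebra with flat Frobenius φ, and let M be an R-module with an R-linear map f : M → φ*M. Define the unitalization M^unit as the colimit of M → φ*M → φ²*M → ⋯ (maps given by f, φ*f, φ²*f, …). Then M^unit carries a natural unit R[F]-module structure: the canonical map φ*(M^unit) → M^unit is an isomorphism. -/

import Mathlib

open scoped TensorProduct

/-- A copy of `R` viewed as an `R`-algebra via the Frobenius `φ : R → R`, so that
`Rphi p R ⊗[R] M` is the Frobenius base change `φ*M`. -/
def Rphi (_p : ℕ) (R : Type u) : Type u := R

instance Rphi.instCommRing (p : ℕ) (R : Type u) [CommRing R] : CommRing (Rphi p R) :=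
  ‹CommRing R›

noncomputable instance Rphi.instAlgebra (p : ℕ) (R : Type u) [CommRing R] [Fact p.Prime]
    [CharP R p] : Algebra R (Rphi p R) :=
  RingHom.toAlgebra (S := Rphi p R) (frobenius R p)

/-- A unit `R[F]`-module structure: the linearization `φ*M → M`, `a ⊗ m ↦ a • F m`, is an
isomorphism. -/
def UnitFModule (p : ℕ) (R : Type u) (M : Type v) [Fact p.Prime] [CommRing R] [CharP R p]
    [AddCommGroup M] [Module R M] (F : M → M) : Prop :=
  ∃ Fs : (Rphi p R) ⊗[R] M →+ M,
    (∀ (a : R) (m : M), Fs ((show Rphi p R from a) ⊗ₜ[R] m) = a • F m) ∧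
    Function.Bijective Fs

/-- Composite transition maps of a tower `N 0 → N 1 → ⋯`. -/
def tIter {R : Type u} [CommRing R] (N : ℕ → Type v) [∀ n, AddCommGroup (N n)]
    [∀ n, Module R (N n)] (t : ∀ n, N n →ₗ[R] N (n + 1)) (n : ℕ) :
    (k : ℕ) → N n → N (n + k)
  | 0 => fun x => x
  | k + 1 => fun x => t (n + k) (tIter N t n k x)

/-! ### Auxiliary definitions -/


/-- The identity, from `Rphi p R` back to `R`. -/
def Rphi.toR {p : ℕ} {R : Type u} (a : Rphi p R) : R := a

lemma Rphi.smul_toR (p : ℕ) [Fact p.Prime] {R : Type u} [CommRing R] [CharP R p]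
    (r : R) (a : Rphi p R) : (r • a).toR = r ^ p * a.toR := rfl

/-- Linearization of an additive Frobenius-semilinear map. -/
noncomputable def lamAux (p : ℕ) [Fact p.Prime] {R : Type u} [CommRing R] [CharP R p]
    {X Y : Type v} [AddCommGroup X] [AddCommGroup Y] [Module R X] [Module R Y]
    (jf : X → Y) (hadd : ∀ x y, jf (x + y) = jf x + jf y)
    (hsemi : ∀ (r : R) (x : X), jf (r • x) = r ^ p • jf x) :
    Rphi p R ⊗[R] X →+ Y :=
  TensorProduct.liftAddHom
    (AddMonoidHom.mk'
      (fun a => AddMonoidHom.mk' (fun x => a.toR • jf x)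
        (fun x y => by simp only [hadd, smul_add]))
      (fun a b => AddMonoidHom.ext fun x => add_smul a.toR b.toR (jf x)))
    (by
      intro r a x
      show (r • a).toR • jf x = a.toR • jf (r • x)
      rw [hsemi, smul_smul, Rphi.smul_toR, mul_comm])

lemma lamAux_tmul (p : ℕ) [Fact p.Prime] {R : Type u} [CommRing R] [CharP R p]
    {X Y : Type v} [AddCommGroup X] [AddCommGroup Y] [Module R X] [Module R Y]
    (jf : X → Y) (hadd : ∀ x y, jf (x + y) = jf x + jf y)
    (hsemi : ∀ (r : R) (x : X), jf (r • x) = r ^ p • jf x) (a : Rphi p R) (x : X) :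
    lamAux p jf hadd hsemi (a ⊗ₜ[R] x) = a.toR • jf x := rfl

lemma Rphi.one_tmul_smul (p : ℕ) [Fact p.Prime] {R : Type u} [CommRing R] [CharP R p]
    {X : Type v} [AddCommGroup X] [Module R X] (r : R) (x : X) :
    (1 : Rphi p R) ⊗ₜ[R] (r • x) = (show Rphi p R from r ^ p) • ((1 : Rphi p R) ⊗ₜ[R] x) := by
  rw [← TensorProduct.smul_tmul, TensorProduct.smul_tmul']
  rfl

lemma Rphi.toR_smul_one_tmul (p : ℕ) [Fact p.Prime] {R : Type u} [CommRing R] [CharP R p]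
    {X : Type v} [AddCommGroup X] [Module R X] (a : Rphi p R) (x : X) :
    (show Rphi p R from a.toR) • ((1 : Rphi p R) ⊗ₜ[R] x) = a ⊗ₜ[R] x := by
  rw [TensorProduct.smul_tmul', smul_eq_mul, mul_one]
  rfl

/-- The transition maps as linear maps, iterated. -/
def Tlin {R : Type u} [CommRing R] (N : ℕ → Type v) [∀ n, AddCommGroup (N n)]
    [∀ n, Module R (N n)] (t : ∀ n, N n →ₗ[R] N (n + 1)) (n : ℕ) :
    (k : ℕ) → (N n →ₗ[R] N (n + k))
  | 0 => LinearMap.id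
  | k + 1 => (t (n + k)).comp (Tlin N t n k)

lemma tIter_eq_Tlin {R : Type u} [CommRing R] (N : ℕ → Type v) [∀ n, AddCommGroup (N n)]
    [∀ n, Module R (N n)] (t : ∀ n, N n →ₗ[R] N (n + 1)) (n k : ℕ) (x : N n) :
    tIter N t n k x = Tlin N t n k x := by
  induction k with
  | zero => rfl
  | succ k ih =>
    show t (n + k) (tIter N t n k x) = t (n + k) (Tlin N t n k x)
    rw [ih]

/-- Let `R` be an `F_p`-algebra with flat Frobenius `φ`, and let `M` be an
`R`-module with an `R`-linear map `f : M → φ*M`.  The unitalization `M^unit` is the colimit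
of `M → φ*M → φ²*M → ⋯`.  Then `M^unit` carries a natural unit `R[F]`-module structure: the
canonical semilinear operator (shifting the tower) has bijective linearization
`φ*(M^unit) → M^unit`.

Encoding: `N 0` plays the role of `M`; each `j n : N n → N (n+1)` is the canonical
(additive, Frobenius-semilinear) map `X → φ*X`, characterized by its universal property
among semilinear maps out of `N n`; `t 0 = f` and `t (n+1) = φ*(t n)` is expressed by the
compatibility `t (n+1) ∘ j n = j (n+1) ∘ t n`; and `C` together with the maps `g n` is the
colimit of the tower `(N, t)`. -/
theorem stmt13 (p : ℕ) [Fact p.Prime] (R : Type u) [CommRing R] [CharP R p]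
    [Module.Flat R (Rphi p R)]
    (N : ℕ → Type u) [∀ n, AddCommGroup (N n)] [∀ n, Module R (N n)]
    (j : ∀ n, N n → N (n + 1))
    (hjadd : ∀ n x y, j n (x + y) = j n x + j n y)
    (hjsemi : ∀ n (r : R) (x : N n), j n (r • x) = r ^ p • j n x)
    (hjuniv : ∀ (n : ℕ) (Y : Type u) [AddCommGroup Y] [Module R Y] (gq : N n → Y),
      (∀ x y, gq (x + y) = gq x + gq y) → (∀ (r : R) (x : N n), gq (r • x) = r ^ p • gq x) →
      ∃! h : N (n + 1) →ₗ[R] Y, ∀ x, h (j n x) = gq x)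
    (t : ∀ n, N n →ₗ[R] N (n + 1))
    (hcompat : ∀ n (x : N n), t (n + 1) (j n x) = j (n + 1) (t n x))
    (C : Type u) [AddCommGroup C] [Module R C] (g : ∀ n, N n →ₗ[R] C)
    (hg : ∀ n (x : N n), g (n + 1) (t n x) = g n x)
    (hsurj : ∀ c : C, ∃ n, ∃ x : N n, g n x = c)
    (hker : ∀ n (x : N n), g n x = 0 → ∃ k, tIter N t n k x = 0) :
    ∃ FC : C → C,
      (∀ x y, FC (x + y) = FC x + FC y) ∧
      (∀ (r : R) (c : C), FC (r • c) = r ^ p • FC c) ∧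
      (∀ n (x : N n), FC (g n x) = g (n + 1) (j n x)) ∧
      UnitFModule p R C FC := by
  classical
  -- cast lemmas
  have gcast : ∀ {a b : ℕ} (h : a = b) (x : N a), g b (h ▸ x) = g a x := by
    intro a b h x; subst h; rfl
  have φcast : ∀ {a b : ℕ} (h : a = b) (x : N a),
      g (b + 1) (j b (h ▸ x)) = g (a + 1) (j a x) := by
    intro a b h x; subst h; rfl
  have Tcast : ∀ {a b : ℕ} (h : a = b) (k : ℕ) (x : N a) (h' : a + k = b + k),
      Tlin N t b k (h ▸ x) = h' ▸ Tlin N t a k x := by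
    intro a b h k x h'; subst h; rfl
  have cast0 : ∀ {a b : ℕ} (h : a = b) (v : N a), h ▸ v = (0 : N b) → v = 0 := by
    intro a b h v hv; subst h; exact hv
  -- transporting along the tower
  have hgT : ∀ n k (x : N n), g (n + k) (Tlin N t n k x) = g n x := by
    intro n k x
    induction k with
    | zero => rfl
    | succ k ih =>
      show g (n + k + 1) (t (n + k) (Tlin N t n k x)) = g n x
      rw [hg]; exact ih
  have φT : ∀ n k (x : N n),
      g (n + k + 1) (j (n + k) (Tlin N t n k x)) = g (n + 1) (j n x) := by
    intro n k x
    induction k with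
    | zero => rfl
    | succ k ih =>
      show g (n + k + 1 + 1) (j (n + k + 1) (t (n + k) (Tlin N t n k x))) = g (n + 1) (j n x)
      rw [← hcompat, hg]
      exact ih
  -- well-definedness of the operator
  have wd : ∀ n m (x : N n) (y : N m), g n x = g m y →
      g (n + 1) (j n x) = g (m + 1) (j m y) := by
    intro n m x y hxy
    have hmn : m + n = n + m := Nat.add_comm m n
    have hmnk : ∀ k : ℕ, m + n + k = n + m + k := fun k => by omega
    have hgv : g (n + m) (hmn ▸ Tlin N t m n y) = g m y := by rw [gcast, hgT]
    have h0 : g (n + m) (Tlin N t n m x - hmn ▸ Tlin N t m n y) = 0 := by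
      rw [map_sub, hgT, hgv, hxy, sub_self]
    obtain ⟨k, hk⟩ := hker _ _ h0
    rw [tIter_eq_Tlin, map_sub, sub_eq_zero] at hk
    calc g (n + 1) (j n x) = g (n + m + 1) (j (n + m) (Tlin N t n m x)) := (φT n m x).symm
      _ = g (n + m + k + 1) (j (n + m + k) (Tlin N t (n + m) k (Tlin N t n m x))) :=
          (φT (n + m) k _).symm
      _ = g (n + m + k + 1) (j (n + m + k) (Tlin N t (n + m) k (hmn ▸ Tlin N t m n y))) := by
          rw [hk]
      _ = g (n + m + k + 1) (j (n + m + k) ((hmnk k) ▸ Tlin N t (m + n) k (Tlin N t m n y))) := by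
          rw [Tcast hmn k _ (hmnk k)]
      _ = g (m + n + k + 1) (j (m + n + k) (Tlin N t (m + n) k (Tlin N t m n y))) :=
          φcast (hmnk k) _
      _ = g (m + n + 1) (j (m + n) (Tlin N t m n y)) := φT (m + n) k _
      _ = g (m + 1) (j m y) := φT m n y
  -- the operator FC
  obtain ⟨FC, FCg⟩ : ∃ FC : C → C, ∀ n (x : N n), FC (g n x) = g (n + 1) (j n x) := by
    choose nn xx hgx using hsurj
    exact ⟨fun c => g (nn c + 1) (j (nn c) (xx c)), fun n x => wd _ _ _ _ (hgx (g n x))⟩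
  have rep2 : ∀ c d : C, ∃ n, ∃ x y : N n, g n x = c ∧ g n y = d := by
    intro c d
    obtain ⟨n, x, hx⟩ := hsurj c
    obtain ⟨m, y, hy⟩ := hsurj d
    exact ⟨n + m, Tlin N t n m x, (Nat.add_comm m n) ▸ Tlin N t m n y,
      by rw [hgT]; exact hx, by rw [gcast, hgT]; exact hy⟩
  have FCadd : ∀ x y : C, FC (x + y) = FC x + FC y := by
    intro c d
    obtain ⟨n, x, y, rfl, rfl⟩ := rep2 c d
    rw [← map_add, FCg, FCg, FCg, hjadd, map_add]
  have FCsmul : ∀ (r : R) (c : C), FC (r • c) = r ^ p • FC c := by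
    intro r c
    obtain ⟨n, x, rfl⟩ := hsurj c
    rw [← map_smul, FCg, FCg, hjsemi, map_smul]
  refine ⟨FC, FCadd, FCsmul, FCg, ?_⟩
  -- the linearizations of j and of FC
  let lam : ∀ n, Rphi p R ⊗[R] N n →+ N (n + 1) :=
    fun n => lamAux p (j n) (hjadd n) (hjsemi n)
  let Fs : Rphi p R ⊗[R] C →+ C := lamAux p FC FCadd FCsmul
  have lam_tmul : ∀ n (a : Rphi p R) (x : N n), lam n (a ⊗ₜ[R] x) = a.toR • j n x :=
    fun n a x => rfl
  have Fs_tmul : ∀ (a : Rphi p R) (c : C), Fs (a ⊗ₜ[R] c) = a.toR • FC c :=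
    fun a c => rfl
  let ψ : ∀ n, Rphi p R ⊗[R] N n →ₗ[R] Rphi p R ⊗[R] C :=
    fun n => TensorProduct.map LinearMap.id (g n)
  let Θ : ∀ n k, Rphi p R ⊗[R] N n →ₗ[R] Rphi p R ⊗[R] N (n + k) :=
    fun n k => TensorProduct.map LinearMap.id (Tlin N t n k)
  have ψ_tmul : ∀ n (a : Rphi p R) (x : N n), ψ n (a ⊗ₜ[R] x) = a ⊗ₜ[R] g n x :=
    fun n a x => rfl
  have Θ_tmul : ∀ n k (a : Rphi p R) (x : N n), Θ n k (a ⊗ₜ[R] x) = a ⊗ₜ[R] Tlin N t n k x :=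
    fun n k a x => rfl
  -- span of the range of j is everything
  have span_top : ∀ n, Submodule.span R (Set.range (j n)) = ⊤ := by
    intro n
    set S := Submodule.span R (Set.range (j n)) with hS
    obtain ⟨h, -, huniq⟩ := hjuniv n (N (n + 1) ⧸ S) (fun x => S.mkQ (j n x))
      (fun x y => by simp only [hjadd, map_add])
      (fun r x => by simp only [hjsemi, map_smul])
    have h1 : S.mkQ = h := huniq S.mkQ (fun x => rfl)
    have h2 : (0 : N (n + 1) →ₗ[R] N (n + 1) ⧸ S) = h :=
      huniq 0 (fun x =>
        ((Submodule.Quotient.mk_eq_zero S).2 (Submodule.subset_span ⟨x, rfl⟩)).symm)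
    rw [Submodule.eq_top_iff']
    intro v
    have hv : S.mkQ v = 0 := by rw [h1, ← h2]; rfl
    rwa [Submodule.mkQ_apply, Submodule.Quotient.mk_eq_zero] at hv
  -- injectivity of the linearization of j
  have lam_inj : ∀ n, Function.Injective (lam n) := by
    intro n
    letI instQ : Module R (Rphi p R ⊗[R] N n) :=
      (inferInstance : Module (Rphi p R) (Rphi p R ⊗[R] N n))
    obtain ⟨h1, hh1, -⟩ := hjuniv n (Rphi p R ⊗[R] N n)
      (fun x => (1 : Rphi p R) ⊗ₜ[R] x)
      (fun x y => TensorProduct.tmul_add _ x y)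
      (fun r x => Rphi.one_tmul_smul p r x)
    have hinv : ∀ w, h1 (lam n w) = w := by
      intro w
      induction w using TensorProduct.induction_on with
      | zero => rw [map_zero, map_zero]
      | tmul a x =>
        rw [lam_tmul, h1.map_smul, hh1]
        exact Rphi.toR_smul_one_tmul p a x
      | add z1 z2 ih1 ih2 => rw [map_add, map_add, ih1, ih2]
    exact Function.LeftInverse.injective hinv
  -- intertwining relations
  have lam_t : ∀ n (w : Rphi p R ⊗[R] N n),
      t (n + 1) (lam n w) = lam (n + 1) (TensorProduct.map LinearMap.id (t n) w) := by
    intro n w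
    induction w using TensorProduct.induction_on with
    | zero => simp only [map_zero]
    | tmul a x =>
      rw [lam_tmul, map_smul, hcompat,
        show TensorProduct.map LinearMap.id (t n) (a ⊗ₜ[R] x) = a ⊗ₜ[R] t n x from rfl,
        lam_tmul]
    | add z1 z2 ih1 ih2 => rw [map_add, map_add, ih1, ih2, map_add, map_add]
  have Θ_zero : ∀ n (w : Rphi p R ⊗[R] N n), Θ n 0 w = w := by
    intro n w
    induction w using TensorProduct.induction_on with
    | zero => rw [map_zero]
    | tmul a x => rw [Θ_tmul]; rfl
    | add z1 z2 ih1 ih2 => rw [map_add, ih1, ih2]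
  have Θ_succ : ∀ n k (w : Rphi p R ⊗[R] N n),
      Θ n (k + 1) w = TensorProduct.map LinearMap.id (t (n + k)) (Θ n k w) := by
    intro n k w
    induction w using TensorProduct.induction_on with
    | zero => simp only [map_zero]
    | tmul a x => rw [Θ_tmul, Θ_tmul]; rfl
    | add z1 z2 ih1 ih2 => rw [map_add, map_add, ih1, ih2, map_add]
  have ψ_t : ∀ n (w : Rphi p R ⊗[R] N n),
      ψ (n + 1) (TensorProduct.map LinearMap.id (t n) w) = ψ n w := by
    intro n w
    induction w using TensorProduct.induction_on with
    | zero => simp only [map_zero]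
    | tmul a x =>
      rw [show TensorProduct.map LinearMap.id (t n) (a ⊗ₜ[R] x) = a ⊗ₜ[R] t n x from rfl,
        ψ_tmul, ψ_tmul, hg]
    | add z1 z2 ih1 ih2 => rw [map_add, map_add, ih1, ih2, map_add]
  have hψT : ∀ n k (w : Rphi p R ⊗[R] N n), ψ (n + k) (Θ n k w) = ψ n w := by
    intro n k w
    induction k with
    | zero => rw [Θ_zero]; rfl
    | succ k ih =>
      rw [Θ_succ]
      show ψ (n + k + 1) (TensorProduct.map LinearMap.id (t (n + k)) (Θ n k w)) = ψ n w
      rw [ψ_t]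
      exact ih
  have Fsψ : ∀ n (w : Rphi p R ⊗[R] N n), Fs (ψ n w) = g (n + 1) (lam n w) := by
    intro n w
    induction w using TensorProduct.induction_on with
    | zero => simp only [map_zero]
    | tmul a x => rw [ψ_tmul, Fs_tmul, FCg, lam_tmul, map_smul]
    | add z1 z2 ih1 ih2 => rw [map_add, map_add, ih1, ih2, map_add, map_add]
  -- cast lemmas for tensors
  have ψcast : ∀ {a b : ℕ} (h : a = b) (w : Rphi p R ⊗[R] N a), ψ b (h ▸ w) = ψ a w := by
    intro a b h w; subst h; rfl
  have tcastN : ∀ {a b : ℕ} (h : a = b) (x : N a) (h' : a + 1 = b + 1),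
      t b (h ▸ x) = h' ▸ t a x := by
    intro a b h x h'; subst h; rfl
  have lamT : ∀ n k (w : Rphi p R ⊗[R] N n) (h : n + k + 1 = n + 1 + k),
      tIter N t (n + 1) k (lam n w) = h ▸ lam (n + k) (Θ n k w) := by
    intro n k w
    induction k with
    | zero => intro h; rw [Θ_zero]; rfl
    | succ k ih =>
      intro h
      show t (n + 1 + k) (tIter N t (n + 1) k (lam n w)) = h ▸ lam (n + k + 1) (Θ n (k + 1) w)
      rw [ih (by omega), tcastN (by omega : n + k + 1 = n + 1 + k) _ h, lam_t, ← Θ_succ]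
  -- every tensor comes from a finite stage
  have repT : ∀ z : Rphi p R ⊗[R] C, ∃ n w, ψ n w = z := by
    intro z
    induction z using TensorProduct.induction_on with
    | zero => exact ⟨0, 0, map_zero _⟩
    | tmul a c =>
      obtain ⟨n, x, hx⟩ := hsurj c
      exact ⟨n, a ⊗ₜ[R] x, by rw [ψ_tmul, hx]⟩
    | add z1 z2 ih1 ih2 =>
      obtain ⟨n, w1, hw1⟩ := ih1
      obtain ⟨m, w2, hw2⟩ := ih2
      refine ⟨n + m, Θ n m w1 + (Nat.add_comm m n) ▸ Θ m n w2, ?_⟩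
      rw [map_add, hψT, ψcast (Nat.add_comm m n), hψT, hw1, hw2]
  refine ⟨Fs, fun a m => rfl, ?_, ?_⟩
  · -- injectivity
    rw [injective_iff_map_eq_zero]
    intro z hz
    obtain ⟨n, w, rfl⟩ := repT z
    rw [Fsψ] at hz
    obtain ⟨k, hk⟩ := hker _ _ hz
    rw [lamT n k w (by omega)] at hk
    have h0 : lam (n + k) (Θ n k w) = 0 := cast0 _ _ hk
    have hw : Θ n k w = 0 := (injective_iff_map_eq_zero _).1 (lam_inj (n + k)) _ h0
    rw [← hψT n k w, hw, map_zero]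
  · -- surjectivity
    intro c
    obtain ⟨n, x, rfl⟩ := hsurj c
    have smulFs : ∀ (r : R) (z : Rphi p R ⊗[R] C), ∃ z', Fs z' = r • Fs z := by
      intro r z
      induction z using TensorProduct.induction_on with
      | zero => exact ⟨0, by simp only [map_zero, smul_zero]⟩
      | tmul a c =>
        refine ⟨(show Rphi p R from r * a.toR) ⊗ₜ[R] c, ?_⟩
        rw [Fs_tmul, Fs_tmul, smul_smul]
        rfl
      | add z1 z2 ih1 ih2 =>
        obtain ⟨w1, h1⟩ := ih1
        obtain ⟨w2, h2⟩ := ih2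
        exact ⟨w1 + w2, by rw [map_add, h1, h2, map_add, smul_add]⟩
    have main : ∀ v ∈ Submodule.span R (Set.range (j n)), ∃ z, Fs z = g (n + 1) v := by
      intro v hv
      induction hv using Submodule.span_induction with
      | mem v hv =>
        obtain ⟨x', rfl⟩ := hv
        refine ⟨(1 : Rphi p R) ⊗ₜ[R] g n x', ?_⟩
        rw [Fs_tmul, FCg]
        show (1 : R) • _ = _
        rw [one_smul]
      | zero => exact ⟨0, by rw [map_zero, map_zero]⟩
      | add v w _ _ ih1 ih2 =>
        obtain ⟨z1, h1⟩ := ih1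
        obtain ⟨z2, h2⟩ := ih2
        exact ⟨z1 + z2, by rw [map_add, h1, h2, map_add]⟩
      | smul r v hv ih =>
        obtain ⟨z, hz⟩ := ih
        obtain ⟨z', hz'⟩ := smulFs r z
        exact ⟨z', by rw [hz', hz, map_smul]⟩
    have hmem : t n x ∈ Submodule.span R (Set.range (j n)) := by
      rw [span_top n]; trivial
    obtain ⟨z, hz⟩ := main _ hmem
    exact ⟨z, by rw [hz, hg]⟩
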